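/- arXiv:2507.07823 — 2 statements merged into one kernel-verified Lean document; each statement's English description precedes it below -/
import Mathlib

section
/- For every real b > 0 and every real ω, ∫_{-1}^{1} I₀(b√(1-t²)) e^{iωt} dt = 2 sinc(√(ω² - b²)), where for ω² < b² the right-hand side is interpreted via sinc(iz) = sinh(z)/z, i.e., equals 2 sinh(√(b²-ω²))/√(b²-ω²). -/
open Real intervalIntegral

/-- Modified Bessel function of the first kind of order zero,
via its standard integral representation. -/
noncomputable def besselI0 (x : ℝ) : ℝ :=
  (1 / Real.pi) * ∫ θ in (0:ℝ)..Real.pi, Real.exp (x * Real.cos θ)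

/-- `sinc z = sin z / z`, `sinc 0 = 1`. -/
noncomputable def sinc (x : ℝ) : ℝ := if x = 0 then 1 else Real.sin x / x

open MeasureTheory Finset Nat

lemma my_hasSum_sinh (x : ℝ) : HasSum (fun n : ℕ => x ^ (2*n+1) / ((2*n+1)! : ℝ)) (Real.sinh x) := by
  have h := Complex.hasSum_sin (x * Complex.I)
  rw [Complex.sin_mul_I] at h
  have h2 : HasSum (fun n : ℕ => ((x:ℂ) ^ (2*n+1) / ((2*n+1)! : ℂ)) * Complex.I) (Complex.sinh x * Complex.I) := by
    refine h.congr_fun fun n => ?_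
    have hI2 : Complex.I ^ (2*n+1) = (-1)^n * Complex.I := by
      rw [pow_succ, pow_mul, Complex.I_sq]
    have hmm : ((-1:ℂ))^n * ((-1:ℂ))^n = 1 := by
      rw [← pow_add, ← two_mul, pow_mul]; norm_num
    calc (x:ℂ)^(2*n+1) / ((2*n+1)! : ℂ) * Complex.I
        = ((-1:ℂ)^n * (-1)^n) * ((x:ℂ)^(2*n+1) * Complex.I) / ((2*n+1)! : ℂ) := by rw [hmm]; ring
      _ = (-1:ℂ)^n * ((x:ℂ) * Complex.I)^(2*n+1) / ((2*n+1)! : ℂ) := by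
          rw [mul_pow, hI2]; ring
  have h3 := h2.mul_right (Complex.I⁻¹)
  simp only [mul_assoc, mul_inv_cancel₀ Complex.I_ne_zero, mul_one] at h3
  rw [← Complex.ofReal_sinh] at h3
  have heq : (fun n : ℕ => ((x:ℂ) ^ (2*n+1) / ((2*n+1)! : ℂ))) = fun n : ℕ => ((x ^ (2*n+1) / ((2*n+1)! : ℝ) : ℝ) : ℂ) := by
    funext n; push_cast; ring
  rw [heq] at h3
  exact Complex.hasSum_ofReal.mp h3


lemma cos_pow_even (k : ℕ) :
    ∫ θ in (0:ℝ)..π, Real.cos θ ^ (2*k) = π * ((2*k)! : ℝ) / ((k ! : ℝ)^2 * 4^k) := by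
  induction k with
  | zero => simp
  | succ k ih =>
    have h := integral_cos_pow (a := 0) (b := π) (2*k)
    have h2 : 2*(k+1) = 2*k+2 := by ring
    rw [h2, h, ih]
    simp only [Real.sin_pi, Real.sin_zero, mul_zero, zero_mul]
    have e1 : ((2*k+2)! : ℝ) = (2*(k:ℝ)+2) * ((2*(k:ℝ)+1) * ((2*k)! : ℝ)) := by
      have h3 : 2*k+2 = (2*k+1)+1 := by ring
      rw [h3, Nat.factorial_succ, Nat.factorial_succ]; push_cast; ring
    have e2 : (((k+1))! : ℝ) = ((k:ℝ)+1) * (k ! : ℝ) := by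
      rw [Nat.factorial_succ]; push_cast; ring
    rw [e1, e2]
    have h4 : ((2*k)! : ℝ) ≠ 0 := by positivity
    have h5 : ((k)! : ℝ) ≠ 0 := by positivity
    have h6 : (2*(k:ℝ)+2) ≠ 0 := by positivity
    field_simp
    push_cast; ring

lemma cos_pow_odd (k : ℕ) : ∫ θ in (0:ℝ)..π, Real.cos θ ^ (2*k+1) = 0 := by
  induction k with
  | zero => simpa using integral_cos (a := 0) (b := π)
  | succ k ih =>
    have h := integral_cos_pow (a := 0) (b := π) (2*k+1)
    have h2 : 2*(k+1)+1 = 2*k+1+2 := by ring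
    rw [h2, h, ih]
    simp

lemma hasSum_exp' (y : ℝ) : HasSum (fun m : ℕ => y ^ m / (m ! : ℝ)) (Real.exp y) := by
  rw [Real.exp_eq_exp_ℝ]
  exact NormedSpace.expSeries_div_hasSum_exp y

lemma besselI0_hasSum (x : ℝ) :
    HasSum (fun k : ℕ => (x^2/4)^k / ((k ! : ℝ)^2)) (besselI0 x) := by
  set F : ℕ → ℝ → ℝ := fun m θ => (x * Real.cos θ) ^ m / (m ! : ℝ) with hF
  have hFint : ∀ m, IntegrableOn (F m) (Set.Ioc 0 π) := by
    intro m
    exact ((continuous_const.mul Real.continuous_cos).pow m |>.div_const _).integrableOn_Ioc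
  have hbound : ∀ m, (∫ θ in Set.Ioc 0 π, ‖F m θ‖) ≤ π * (|x|^m / (m ! : ℝ)) := by
    intro m
    have h1 : ∀ θ ∈ Set.Ioc (0:ℝ) π, ‖F m θ‖ ≤ |x|^m / (m ! : ℝ) := by
      intro θ _
      have : |x * Real.cos θ| ≤ |x| := by
        rw [abs_mul]
        calc |x| * |Real.cos θ| ≤ |x| * 1 := by
              exact mul_le_mul_of_nonneg_left (Real.abs_cos_le_one θ) (abs_nonneg x)
          _ = |x| := mul_one _
      rw [hF]
      simp only [norm_div, norm_pow, Real.norm_eq_abs, Nat.abs_cast]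
      have hc : (0:ℝ) < (m ! : ℝ) := by positivity
      exact (div_le_div_iff_of_pos_right hc).mpr (pow_le_pow_left₀ (abs_nonneg _) this m)
    calc (∫ θ in Set.Ioc 0 π, ‖F m θ‖) ≤ ∫ _ in Set.Ioc (0:ℝ) π, (|x|^m / (m ! : ℝ)) := by
          refine setIntegral_mono_on (hFint m).norm (integrableOn_const (by simp [Real.volume_Ioc]))
            measurableSet_Ioc h1
      _ = π * (|x|^m / (m ! : ℝ)) := by
          simp [Real.volume_Ioc, Real.pi_nonneg, smul_eq_mul]
  have hsum : Summable fun m => (∫ θ in Set.Ioc 0 π, ‖F m θ‖) := by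
    refine Summable.of_nonneg_of_le (fun m => ?_) hbound ?_
    · exact integral_nonneg fun θ => norm_nonneg _
    · exact (Real.summable_pow_div_factorial |x|).mul_left π
  have H := hasSum_integral_of_summable_integral_norm (μ := volume.restrict (Set.Ioc 0 π))
    hFint hsum
  have hpt : (fun θ => ∑' m, F m θ) = fun θ => Real.exp (x * Real.cos θ) :=
    funext fun θ => (hasSum_exp' (x * Real.cos θ)).tsum_eq
  rw [hpt] at H
  -- each term
  have hterm : ∀ m, (∫ θ in Set.Ioc 0 π, F m θ) = x^m / (m ! : ℝ) * ∫ θ in (0:ℝ)..π, Real.cos θ ^ m := by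
    intro m
    rw [← intervalIntegral.integral_of_le Real.pi_nonneg, ← intervalIntegral.integral_const_mul]
    congr 1; funext θ; rw [hF]; simp [mul_pow]; ring
  have H2 : HasSum (fun m => x^m / (m ! : ℝ) * ∫ θ in (0:ℝ)..π, Real.cos θ ^ m)
      (∫ θ in (0:ℝ)..π, Real.exp (x * Real.cos θ)) := by
    rw [intervalIntegral.integral_of_le Real.pi_nonneg]
    exact H.congr_fun fun m => (hterm m).symm
  -- restrict to even indices
  have hodd : ∀ m ∉ Set.range (fun k : ℕ => 2*k), (fun m => x^m / (m ! : ℝ) * ∫ θ in (0:ℝ)..π, Real.cos θ ^ m) m = 0 := by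
    intro m hm
    rcases Nat.even_or_odd m with he | ho
    · obtain ⟨r, rfl⟩ := he
      exact absurd ⟨r, by simp [two_mul]⟩ hm
    · obtain ⟨k, rfl⟩ := ho
      simp [cos_pow_odd k]
  have hinj : Function.Injective (fun k : ℕ => 2*k) := fun a b h => by simpa using h
  have H3 := (Function.Injective.hasSum_iff hinj hodd).mpr H2
  -- simplify even terms
  have H4 : HasSum (fun k : ℕ => π * ((x^2/4)^k / ((k ! : ℝ)^2)))
      (∫ θ in (0:ℝ)..π, Real.exp (x * Real.cos θ)) := by
    refine H3.congr_fun fun k => ?_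
    simp only [Function.comp]
    rw [cos_pow_even k]
    have h1 : ((2*k)! : ℝ) ≠ 0 := by positivity
    have h2 : ((k)! : ℝ) ≠ 0 := by positivity
    have h3 : (x^2/4)^k = x^(2*k) / 4^k := by
      rw [div_pow, ← pow_mul]
    rw [h3]
    field_simp
  have H5 := H4.div_const π
  have hπ : π ≠ 0 := Real.pi_ne_zero
  have heq : besselI0 x = (∫ θ in (0:ℝ)..π, Real.exp (x * Real.cos θ)) / π := by
    rw [besselI0]; ring
  rw [heq]
  exact H5.congr_fun fun k => by field_simp


lemma mom_odd (n k : ℕ) : ∫ t in (-1:ℝ)..1, t^(2*n+1) * (1 - t^2)^k = 0 := by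
  have h := intervalIntegral.integral_comp_neg (a := (-1:ℝ)) (b := 1)
    (fun t => t^(2*n+1) * (1 - t^2)^k)
  simp only [neg_neg] at h
  have h2 : (fun t : ℝ => (-t)^(2*n+1) * (1 - (-t)^2)^k) = fun t : ℝ => -(t^(2*n+1) * (1 - t^2)^k) := by
    funext t
    have : (-t)^(2*n+1) = -t^(2*n+1) := by
      rw [neg_pow]; simp [pow_succ, pow_mul]
    rw [neg_sq, this]; ring
  rw [h2] at h
  rw [intervalIntegral.integral_neg] at h
  linarith [h]

lemma mom_even (k : ℕ) : ∀ n : ℕ, ∫ t in (-1:ℝ)..1, t^(2*n) * (1 - t^2)^k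
    = ((2*n)! : ℝ) * (k ! : ℝ) * 4^(k+1) * ((n+k+1)! : ℝ) / ((n ! : ℝ) * ((2*n+2*k+2)! : ℝ)) := by
  induction k with
  | zero =>
    intro n
    simp only [pow_zero, mul_one, Nat.factorial_zero, Nat.cast_one]
    rw [integral_pow]
    have h1 : (-1:ℝ)^(2*n+1) = -1 := by
      rw [pow_succ, pow_mul]; norm_num
    rw [one_pow, h1]
    have e1 : ((2*n+2)! : ℝ) = (2*(n:ℝ)+2) * ((2*(n:ℝ)+1) * ((2*n)! : ℝ)) := by
      have h3 : 2*n+2 = (2*n+1)+1 := by ring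
      rw [h3, Nat.factorial_succ, Nat.factorial_succ]; push_cast; ring
    have e2 : ((n+1)! : ℝ) = ((n:ℝ)+1) * (n ! : ℝ) := by
      rw [Nat.factorial_succ]; push_cast; ring
    have h4 : ((2*n)! : ℝ) ≠ 0 := by positivity
    have h5 : ((n)! : ℝ) ≠ 0 := by positivity
    have h6 : (2*(n:ℝ)+1) ≠ 0 := by positivity
    have h7 : (2*(n:ℝ)+2) ≠ 0 := by positivity
    simp only [Nat.add_zero]
    rw [e1, e2]
    field_simp
    push_cast; ring
  | succ k ih =>
    intro n
    -- integration by parts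
    have hu : ∀ t ∈ Set.uIcc (-1:ℝ) 1, HasDerivAt (fun t : ℝ => (1 - t^2)^(k+1))
        ((k+1 : ℕ) * (1 - t^2)^k * (-2*t)) t := by
      intro t _
      have h1 : HasDerivAt (fun t : ℝ => 1 - t^2) (-2*t) t := by
        simpa using ((hasDerivAt_pow 2 t).const_sub 1)
      exact h1.pow (k+1) |>.congr_deriv (by push_cast; ring)
    have hv : ∀ t ∈ Set.uIcc (-1:ℝ) 1, HasDerivAt (fun t : ℝ => t^(2*n+1) / (2*n+1))
        (t^(2*n)) t := by
      intro t _
      have h1 := (hasDerivAt_pow (2*n+1) t).div_const (2*n+1)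
      convert h1 using 1
      · rfl
      · rfl
      push_cast
      have : (2*(n:ℝ)+1) ≠ 0 := by positivity
      field_simp
    have hint1 : IntervalIntegrable (fun t : ℝ => (k+1 : ℕ) * (1 - t^2)^k * (-2*t)) volume (-1) 1 := by
      apply Continuous.intervalIntegrable; fun_prop
    have hint2 : IntervalIntegrable (fun t : ℝ => t^(2*n)) volume (-1) 1 := by
      apply Continuous.intervalIntegrable; fun_prop
    have H := intervalIntegral.integral_mul_deriv_eq_deriv_mul hu hv hint1 hint2
    have hb1 : ((1:ℝ) - 1^2)^(k+1) = 0 := by norm_num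
    have hb2 : ((1:ℝ) - (-1)^2)^(k+1) = 0 := by norm_num
    rw [hb1, hb2, zero_mul, zero_mul, sub_zero, zero_sub] at H
    have Hswap : ∫ t in (-1:ℝ)..1, t^(2*n) * (1 - t^2)^(k+1)
        = ∫ t in (-1:ℝ)..1, (1 - t^2)^(k+1) * t^(2*n) := by
      congr 1; funext t; ring
    rw [Hswap, H]
    have Hin : (∫ t in (-1:ℝ)..1, (k+1 : ℕ) * (1 - t^2)^k * (-2*t) * (t^(2*n+1) / (2*n+1)))
        = (-2*(k+1:ℝ)/(2*(n:ℝ)+1)) * ∫ t in (-1:ℝ)..1, t^(2*(n+1)) * (1 - t^2)^k := by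
      rw [← intervalIntegral.integral_const_mul]
      congr 1; funext t; push_cast; ring
    rw [Hin, ih (n+1)]
    -- now pure arithmetic
    have e1 : ((2*(n+1))! : ℝ) = (2*(n:ℝ)+2) * ((2*(n:ℝ)+1) * ((2*n)! : ℝ)) := by
      have h3 : 2*(n+1) = (2*n+1)+1 := by ring
      rw [h3, Nat.factorial_succ, Nat.factorial_succ]; push_cast; ring
    have e2 : ((n+1)! : ℝ) = ((n:ℝ)+1) * (n ! : ℝ) := by
      rw [Nat.factorial_succ]; push_cast; ring
    have e3 : (((k+1))! : ℝ) = ((k:ℝ)+1) * (k ! : ℝ) := by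
      rw [Nat.factorial_succ]; push_cast; ring
    have e4 : ((n+1)+k+1) = (n+(k+1)+1) := by ring
    have e5 : (2*(n+1)+2*k+2) = (2*n+2*(k+1)+2) := by ring
    rw [e1, e2, e3, e4, e5]
    have h4 : ((2*n)! : ℝ) ≠ 0 := by positivity
    have h5 : ((n)! : ℝ) ≠ 0 := by positivity
    have h6 : (2*(n:ℝ)+1) ≠ 0 := by positivity
    have h7 : ((n+(k+1)+1)! : ℝ) ≠ 0 := by positivity
    have h8 : ((2*n+2*(k+1)+2)! : ℝ) ≠ 0 := by positivity
    have h9 : ((k)! : ℝ) ≠ 0 := by positivity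
    field_simp
    ring

lemma A_hasSum (ω : ℝ) (k : ℕ) :
    HasSum (fun n : ℕ => ((((-(ω^2))^n * ((k ! : ℝ) * 4^(k+1) * ((n+k+1)! : ℝ)
        / ((n ! : ℝ) * ((2*n+2*k+2)! : ℝ))) : ℝ)) : ℂ))
      (∫ t in (-1:ℝ)..1, ((1 - t^2 : ℝ) : ℂ)^k * Complex.exp (Complex.I * ω * t)) := by
  set F : ℕ → ℝ → ℂ := fun m t => ((1 - t^2 : ℝ) : ℂ)^k * ((Complex.I * ω * t)^m / (m ! : ℂ)) with hF
  have hpt : ∀ t : ℝ, HasSum (fun m => F m t) (((1 - t^2 : ℝ) : ℂ)^k * Complex.exp (Complex.I * ω * t)) := by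
    intro t
    have h := NormedSpace.expSeries_div_hasSum_exp (Complex.I * ω * t)
    rw [← Complex.exp_eq_exp_ℂ] at h
    exact h.mul_left _
  have hFint : ∀ m, IntegrableOn (F m) (Set.Ioc (-1) 1) := by
    intro m
    apply Continuous.integrableOn_Ioc
    fun_prop
  have hbound : ∀ m, (∫ t in Set.Ioc (-1:ℝ) 1, ‖F m t‖) ≤ 2 * (|ω|^m / (m ! : ℝ)) := by
    intro m
    have h1 : ∀ t ∈ Set.Ioc (-1:ℝ) 1, ‖F m t‖ ≤ |ω|^m / (m ! : ℝ) := by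
      intro t ht
      obtain ⟨ht1, ht2⟩ := ht
      have htsq : t^2 ≤ 1 := by nlinarith
      have htsq0 : (0:ℝ) ≤ 1 - t^2 := by linarith
      have e1 : ‖((1 - t^2 : ℝ) : ℂ)‖ ≤ 1 := by
        rw [Complex.norm_real, Real.norm_eq_abs, abs_of_nonneg htsq0]; nlinarith [sq_nonneg t]
      have e2 : ‖Complex.I * (ω:ℂ) * (t:ℂ)‖ ≤ |ω| := by
        rw [norm_mul, norm_mul, Complex.norm_I, one_mul, Complex.norm_real, Complex.norm_real,
          Real.norm_eq_abs, Real.norm_eq_abs]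
        calc |ω| * |t| ≤ |ω| * 1 := by
              refine mul_le_mul_of_nonneg_left ?_ (abs_nonneg ω)
              rw [abs_le]; constructor <;> linarith
          _ = |ω| := mul_one _
      calc ‖F m t‖ = ‖((1 - t^2 : ℝ) : ℂ)‖^k * (‖Complex.I * (ω:ℂ) * (t:ℂ)‖^m / (m ! : ℝ)) := by
            rw [hF]
            rw [norm_mul, norm_pow, norm_div]
            norm_num
        _ ≤ 1^k * (|ω|^m / (m ! : ℝ)) := by
            gcongr
            all_goals first | exact norm_nonneg _ | exact e1 | exact e2 | positivity
        _ = |ω|^m / (m ! : ℝ) := by rw [one_pow, one_mul]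
    calc (∫ t in Set.Ioc (-1:ℝ) 1, ‖F m t‖) ≤ ∫ _ in Set.Ioc (-1:ℝ) 1, (|ω|^m / (m ! : ℝ)) := by
          refine setIntegral_mono_on (hFint m).norm (integrableOn_const (by simp [Real.volume_Ioc])) measurableSet_Ioc h1
      _ = 2 * (|ω|^m / (m ! : ℝ)) := by
          simp only [MeasureTheory.setIntegral_const, Real.volume_Ioc, smul_eq_mul]
          norm_num
  have hsum : Summable fun m => (∫ t in Set.Ioc (-1:ℝ) 1, ‖F m t‖) := by
    refine Summable.of_nonneg_of_le (fun m => integral_nonneg fun t => norm_nonneg _) hbound ?_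
    exact (Real.summable_pow_div_factorial |ω|).mul_left 2
  have H := hasSum_integral_of_summable_integral_norm (μ := volume.restrict (Set.Ioc (-1) 1))
    hFint hsum
  have hpt2 : (fun t => ∑' m, F m t) = fun t => ((1 - t^2 : ℝ) : ℂ)^k * Complex.exp (Complex.I * ω * t) :=
    funext fun t => (hpt t).tsum_eq
  rw [hpt2] at H
  rw [← intervalIntegral.integral_of_le (by norm_num : (-1:ℝ) ≤ 1)] at H
  -- term values
  have hterm : ∀ m, (∫ t in Set.Ioc (-1:ℝ) 1, F m t)
      = ((Complex.I * ω)^m / (m ! : ℂ)) * ((∫ t in (-1:ℝ)..1, t^m * (1 - t^2)^k : ℝ) : ℂ) := by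
    intro m
    rw [← intervalIntegral.integral_of_le (by norm_num : (-1:ℝ) ≤ 1),
      ← intervalIntegral.integral_ofReal, ← intervalIntegral.integral_const_mul]
    congr 1; funext t
    rw [hF]
    push_cast
    ring
  have H2 := H.congr_fun fun m => (hterm m).symm
  -- odd terms vanish
  have hodd : ∀ m ∉ Set.range (fun n : ℕ => 2*n),
      (fun m => ((Complex.I * ω)^m / (m ! : ℂ)) * ((∫ t in (-1:ℝ)..1, t^m * (1 - t^2)^k : ℝ) : ℂ)) m = 0 := by
    intro m hm
    rcases Nat.even_or_odd m with he | ho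
    · obtain ⟨r, rfl⟩ := he
      exact absurd ⟨r, by simp [two_mul]⟩ hm
    · obtain ⟨n, rfl⟩ := ho
      simp only [mom_odd n k]
      simp
  have hinj : Function.Injective (fun n : ℕ => 2*n) := fun a b h => by simpa using h
  have H3 := (Function.Injective.hasSum_iff hinj hodd).mpr H2
  refine H3.congr_fun fun n => ?_
  simp only [Function.comp]
  rw [mom_even k n]
  have hI : (Complex.I * ω)^(2*n) = ((-(ω^2) : ℝ) : ℂ)^n := by
    rw [pow_mul]
    congr 1
    rw [mul_pow, Complex.I_sq]
    push_cast; ring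
  rw [hI]
  have h1 : ((2*n)! : ℂ) ≠ 0 := by exact_mod_cast (by positivity : ((2*n)! : ℝ) ≠ 0)
  have h2 : ((n)! : ℂ) ≠ 0 := by exact_mod_cast (by positivity : ((n)! : ℝ) ≠ 0)
  have h3 : ((2*n+2*k+2)! : ℂ) ≠ 0 := by exact_mod_cast (by positivity : ((2*n+2*k+2)! : ℝ) ≠ 0)
  push_cast at h1 h2 h3 ⊢
  field_simp

lemma diag_sum (b ω : ℝ) (j : ℕ) :
    ∑ p ∈ Finset.HasAntidiagonal.antidiagonal j,
      ((b^2/4)^p.1 / ((p.1)! : ℝ)^2 * ((-(ω^2))^p.2 * (((p.1)! : ℝ) * 4^(p.1+1) * ((p.2+p.1+1)! : ℝ)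
        / (((p.2)! : ℝ) * ((2*p.2+2*p.1+2)! : ℝ)))))
      = 2 * (b^2 - ω^2)^j / ((2*j+1)! : ℝ) := by
  rw [Finset.Nat.sum_antidiagonal_eq_sum_range_succ_mk]
  have hpow : (b^2 - ω^2)^j = ∑ k ∈ Finset.range (j+1), (b^2)^k * (-(ω^2))^(j-k) * (j.choose k : ℝ) := by
    have := add_pow (b^2) (-(ω^2)) j
    rw [← this]; ring_nf
  rw [hpow, Finset.mul_sum, Finset.sum_div]
  refine Finset.sum_congr rfl fun k hk => ?_
  have hk' : k ≤ j := by simpa using Nat.lt_succ_iff.mp (Finset.mem_range.mp hk)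
  have e1 : j - k + k + 1 = j + 1 := by omega
  have e2 : 2*(j-k) + 2*k + 2 = 2*j+2 := by omega
  rw [e1, e2]
  have echoose : (j.choose k : ℝ) = (j ! : ℝ) / ((k ! : ℝ) * ((j-k)! : ℝ)) := by
    rw [Nat.cast_choose ℝ hk']
  have f1 : ((j+1)! : ℝ) = ((j:ℝ)+1) * (j ! : ℝ) := by
    rw [Nat.factorial_succ]; push_cast; ring
  have f2 : ((2*j+2)! : ℝ) = (2*(j:ℝ)+2) * ((2*j+1)! : ℝ) := by
    have : 2*j+2 = (2*j+1)+1 := by ring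
    rw [this, Nat.factorial_succ]; push_cast; ring
  rw [echoose, f1, f2]
  have h1 : ((k)! : ℝ) ≠ 0 := by positivity
  have h2 : (((j-k))! : ℝ) ≠ 0 := by positivity
  have h3 : ((j)! : ℝ) ≠ 0 := by positivity
  have h4 : ((2*j+1)! : ℝ) ≠ 0 := by positivity
  have h5 : (2*(j:ℝ)+2) ≠ 0 := by positivity
  have h6 : (b^2/4)^k = (b^2)^k / 4^k := by rw [div_pow]
  rw [h6]
  field_simp
  ring


set_option maxHeartbeats 2000000 in
/-- Fourier transform of the Kaiser–Bessel bump: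
`∫_{-1}^1 I₀(b√(1-t²)) e^{iωt} dt = 2 sinc √(ω²-b²)`, where for `ω² < b²` the
right-hand side is interpreted as `2 sinh(√(b²-ω²))/√(b²-ω²)`. -/
theorem kaiser_bessel_fourier_transform (b : ℝ) (hb : 0 < b) (ω : ℝ) :
    (∫ t in (-1:ℝ)..1, (besselI0 (b * Real.sqrt (1 - t ^ 2)) : ℂ) *
        Complex.exp (Complex.I * ω * t)) =
      ((if b ^ 2 ≤ ω ^ 2 then 2 * _root_.sinc (Real.sqrt (ω ^ 2 - b ^ 2))
        else 2 * Real.sinh (Real.sqrt (b ^ 2 - ω ^ 2)) / Real.sqrt (b ^ 2 - ω ^ 2) : ℝ) : ℂ) := by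
  set c : ℕ → ℝ := fun k => (b^2/4)^k / ((k)! : ℝ)^2 with hc
  set aR : ℕ → ℕ → ℝ := fun k n => (-(ω^2))^n * (((k)! : ℝ) * 4^(k+1) * ((n+k+1)! : ℝ)
    / (((n)! : ℝ) * ((2*n+2*k+2)! : ℝ))) with haR
  set A : ℕ → ℂ := fun k => ∫ t in (-1:ℝ)..1, ((1 - t^2 : ℝ) : ℂ)^k * Complex.exp (Complex.I * ω * t) with hA
  set G : ℕ → ℝ → ℂ := fun k t => ((c k * (1 - t^2)^k : ℝ) : ℂ) * Complex.exp (Complex.I * ω * t) with hG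
  have hexp1 : ∀ t : ℝ, ‖Complex.exp (Complex.I * ω * t)‖ = 1 := by
    intro t
    rw [Complex.norm_exp]
    simp
  have hck : ∀ k, 0 ≤ c k := by
    intro k; rw [hc]; positivity
  have hptG : ∀ t ∈ Set.Ioc (-1:ℝ) 1, HasSum (fun k => G k t)
      ((besselI0 (b * Real.sqrt (1 - t ^ 2)) : ℂ) * Complex.exp (Complex.I * ω * t)) := by
    intro t ht
    obtain ⟨ht1, ht2⟩ := ht
    have h0 : (0:ℝ) ≤ 1 - t^2 := by nlinarith
    have hx : (b * Real.sqrt (1 - t^2))^2 / 4 = b^2/4 * (1 - t^2) := by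
      rw [mul_pow, Real.sq_sqrt h0]; ring
    have hBS := besselI0_hasSum (b * Real.sqrt (1 - t^2))
    have hBS2 : HasSum (fun k => c k * (1 - t^2)^k) (besselI0 (b * Real.sqrt (1 - t^2))) := by
      refine hBS.congr_fun fun k => ?_
      rw [hc, hx, mul_pow]
      ring
    exact (Complex.hasSum_ofReal.mpr hBS2).mul_right _
  have hGint : ∀ k, IntegrableOn (G k) (Set.Ioc (-1) 1) := by
    intro k
    apply Continuous.integrableOn_Ioc
    apply Continuous.mul
    · apply Complex.continuous_ofReal.comp
      fun_prop
    · apply Complex.continuous_exp.comp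
      fun_prop
  have hGbound : ∀ k, (∫ t in Set.Ioc (-1:ℝ) 1, ‖G k t‖) ≤ 2 * c k := by
    intro k
    have h1 : ∀ t ∈ Set.Ioc (-1:ℝ) 1, ‖G k t‖ ≤ c k := by
      intro t ht
      obtain ⟨ht1, ht2⟩ := ht
      have h0 : (0:ℝ) ≤ 1 - t^2 := by nlinarith
      have h0' : 1 - t^2 ≤ 1 := by nlinarith [sq_nonneg t]
      rw [hG]
      simp only [norm_mul, hexp1, mul_one, Complex.norm_real, Real.norm_eq_abs]
      rw [abs_of_nonneg (hck k), abs_of_nonneg (by positivity : (0:ℝ) ≤ (1-t^2)^k)]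
      calc c k * (1 - t^2)^k ≤ c k * 1 := by
            refine mul_le_mul_of_nonneg_left ?_ (hck k)
            exact pow_le_one₀ h0 h0'
        _ = c k := mul_one _
    calc (∫ t in Set.Ioc (-1:ℝ) 1, ‖G k t‖) ≤ ∫ _ in Set.Ioc (-1:ℝ) 1, c k := by
          refine setIntegral_mono_on (hGint k).norm (integrableOn_const (by simp [Real.volume_Ioc])) measurableSet_Ioc h1
      _ = 2 * c k := by
          simp only [MeasureTheory.setIntegral_const, Real.volume_Ioc, smul_eq_mul]
          norm_num
  have hcsum : Summable c := by
    refine Summable.of_nonneg_of_le hck (fun k => ?_) (Real.summable_pow_div_factorial (b^2/4))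
    rw [hc]
    have h1 : (0:ℝ) < (k)! := by positivity
    refine div_le_div_of_nonneg_left (by positivity) h1 ?_
    calc ((k)! : ℝ) = ((k)! : ℝ) * 1 := (mul_one _).symm
      _ ≤ ((k)! : ℝ) * ((k)! : ℝ) := by
          refine mul_le_mul_of_nonneg_left ?_ (le_of_lt h1)
          exact_mod_cast Nat.one_le_iff_ne_zero.mpr (Nat.factorial_ne_zero k)
      _ = ((k)! : ℝ)^2 := (sq _).symm
  have hGsum : Summable fun k => (∫ t in Set.Ioc (-1:ℝ) 1, ‖G k t‖) := by
    refine Summable.of_nonneg_of_le (fun k => integral_nonneg fun t => norm_nonneg _) hGbound ?_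
    exact hcsum.mul_left 2
  have HA := hasSum_integral_of_summable_integral_norm (μ := volume.restrict (Set.Ioc (-1) 1))
    hGint hGsum
  have hpt2 : (∫ t in Set.Ioc (-1:ℝ) 1, ∑' k, G k t)
      = ∫ t in Set.Ioc (-1:ℝ) 1, (besselI0 (b * Real.sqrt (1 - t ^ 2)) : ℂ) * Complex.exp (Complex.I * ω * t) := by
    refine setIntegral_congr_fun measurableSet_Ioc fun t ht => ?_
    exact (hptG t ht).tsum_eq
  rw [hpt2, ← intervalIntegral.integral_of_le (by norm_num : (-1:ℝ) ≤ 1)] at HA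
  have hterm : ∀ k, (∫ t in Set.Ioc (-1:ℝ) 1, G k t) = (c k : ℂ) * A k := by
    intro k
    rw [hA, ← intervalIntegral.integral_of_le (by norm_num : (-1:ℝ) ≤ 1),
      ← intervalIntegral.integral_const_mul]
    congr 1; funext t
    rw [hG]
    push_cast
    ring
  have StepA : HasSum (fun k => (c k : ℂ) * A k)
      (∫ t in (-1:ℝ)..1, (besselI0 (b * Real.sqrt (1 - t ^ 2)) : ℂ) * Complex.exp (Complex.I * ω * t)) :=
    HA.congr_fun fun k => (hterm k).symm
  -- Step B: real series for A k
  have hAc : ∀ k, HasSum (fun n => ((aR k n : ℝ) : ℂ)) (A k) := fun k => A_hasSum ω k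
  have hsummable : ∀ k, Summable (aR k) := fun k => Complex.summable_ofReal.mp (hAc k).summable
  set AR : ℕ → ℝ := fun k => ∑' n, aR k n with hARdef
  have hARsum : ∀ k, HasSum (aR k) (AR k) := fun k => (hsummable k).hasSum
  have hAeq : ∀ k, A k = ((AR k : ℝ) : ℂ) := fun k =>
    (hAc k).unique (Complex.hasSum_ofReal.mpr (hARsum k))
  -- Step C: real form of Step A
  have StepC : HasSum (fun k => ((c k * AR k : ℝ) : ℂ))
      (∫ t in (-1:ℝ)..1, (besselI0 (b * Real.sqrt (1 - t ^ 2)) : ℂ) * Complex.exp (Complex.I * ω * t)) := by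
    refine StepA.congr_fun fun k => ?_
    rw [hAeq k]
    push_cast
    ring
  have hcArs : Summable (fun k => c k * AR k) := Complex.summable_ofReal.mp StepC.summable
  set S : ℝ := ∑' k, c k * AR k with hSdef
  have hS : HasSum (fun k => c k * AR k) S := hcArs.hasSum
  have hLHS : (∫ t in (-1:ℝ)..1, (besselI0 (b * Real.sqrt (1 - t ^ 2)) : ℂ)
      * Complex.exp (Complex.I * ω * t)) = ((S : ℝ) : ℂ) :=
    StepC.unique (Complex.hasSum_ofReal.mpr hS)
  -- Step D: double series
  set r : ℕ × ℕ → ℝ := fun p => c p.1 * aR p.1 p.2 with hrdef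
  have hrs : Summable r := by
    have hg1 : Summable (fun k : ℕ => 4 * (b^2)^k / ((k)! : ℝ)) := by
      have := (Real.summable_pow_div_factorial (b^2)).mul_left 4
      refine this.congr fun k => ?_
      ring
    have hg2 : Summable (fun n : ℕ => (ω^2)^n / ((n)! : ℝ)) := Real.summable_pow_div_factorial (ω^2)
    have hprod : Summable (fun p : ℕ × ℕ => (4 * (b^2)^p.1 / ((p.1)! : ℝ)) * ((ω^2)^p.2 / ((p.2)! : ℝ))) :=
      Summable.mul_of_nonneg hg1 hg2 (fun k => by positivity) (fun n => by positivity)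
    refine Summable.of_norm_bounded hprod fun p => ?_
    obtain ⟨k, n⟩ := p
    have h1 : ‖r (k, n)‖ = c k * ((ω^2)^n * (((k)! : ℝ) * 4^(k+1) * ((n+k+1)! : ℝ)
        / (((n)! : ℝ) * ((2*n+2*k+2)! : ℝ)))) := by
      rw [hrdef, haR]
      simp only [Real.norm_eq_abs, abs_mul]
      rw [abs_of_nonneg (hck k), abs_pow, abs_neg, abs_of_nonneg (sq_nonneg ω),
        abs_of_nonneg (by positivity : (0:ℝ) ≤ ((k)! : ℝ) * 4^(k+1) * ((n+k+1)! : ℝ)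
          / (((n)! : ℝ) * ((2*n+2*k+2)! : ℝ)))]
    rw [h1]
    have hfle : ((n+k+1)! : ℝ) ≤ ((2*n+2*k+2)! : ℝ) := by
      exact_mod_cast Nat.factorial_le (by omega)
    have hkf : (0:ℝ) < ((k)! : ℝ) := by positivity
    have hnf : (0:ℝ) < ((n)! : ℝ) := by positivity
    have h2f : (0:ℝ) < ((2*n+2*k+2)! : ℝ) := by positivity
    have key : c k * ((ω^2)^n * (((k)! : ℝ) * 4^(k+1) * ((n+k+1)! : ℝ)
        / (((n)! : ℝ) * ((2*n+2*k+2)! : ℝ))))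
        = (4 * (b^2)^k / ((k)! : ℝ)) * ((ω^2)^n / ((n)! : ℝ)) * (((n+k+1)! : ℝ) / ((2*n+2*k+2)! : ℝ)) := by
      simp only [hc]
      have h4 : (4:ℝ)^(k+1) = 4 * 4^k := by rw [pow_succ]; ring
      have h5 : (b^2/4)^k = (b^2)^k / 4^k := by rw [div_pow]
      rw [h4, h5]
      field_simp
    rw [key]
    calc (4 * (b^2)^k / ((k)! : ℝ)) * ((ω^2)^n / ((n)! : ℝ)) * (((n+k+1)! : ℝ) / ((2*n+2*k+2)! : ℝ))
        ≤ (4 * (b^2)^k / ((k)! : ℝ)) * ((ω^2)^n / ((n)! : ℝ)) * 1 := by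
          refine mul_le_mul_of_nonneg_left ?_ (by positivity)
          rw [div_le_one h2f]
          exact hfle
      _ = (4 * (b^2)^k / ((k)! : ℝ)) * ((ω^2)^n / ((n)! : ℝ)) := mul_one _
  have hr : HasSum r S := by
    have h1 : HasSum r (∑' p, r p) := hrs.hasSum
    have h2 : HasSum (fun k => c k * AR k) (∑' p, r p) :=
      h1.prod_fiberwise (fun k => (hARsum k).mul_left (c k))
    rwa [hS.unique h2]
  -- Step E: antidiagonal regrouping
  set T : ℕ → ℝ := fun j => 2 * (b^2 - ω^2)^j / ((2*j+1)! : ℝ) with hT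
  have hrT : HasSum T S := by
    have he : HasSum (fun x : Σ j : ℕ, {p : ℕ × ℕ // p ∈ Finset.HasAntidiagonal.antidiagonal j} =>
        r (Finset.HasAntidiagonal.sigmaAntidiagonalEquivProd x)) S :=
      (Equiv.hasSum_iff _).mpr hr
    refine HasSum.sigma he fun j => ?_
    have hfin := hasSum_fintype (fun p : {p : ℕ × ℕ // p ∈ Finset.HasAntidiagonal.antidiagonal j} =>
      r (Finset.HasAntidiagonal.sigmaAntidiagonalEquivProd ⟨j, p⟩))
    have hval : ∑ p : {p : ℕ × ℕ // p ∈ Finset.HasAntidiagonal.antidiagonal j},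
        r (Finset.HasAntidiagonal.sigmaAntidiagonalEquivProd ⟨j, p⟩) = T j := by
      have hcoe : ∀ p : {p : ℕ × ℕ // p ∈ Finset.HasAntidiagonal.antidiagonal j},
          r (Finset.HasAntidiagonal.sigmaAntidiagonalEquivProd ⟨j, p⟩) = r p.val := by
        intro p; rfl
      rw [Finset.sum_congr rfl (fun p _ => hcoe p)]
      rw [Finset.sum_coe_sort (Finset.HasAntidiagonal.antidiagonal j) (fun p => r p)]
      rw [hT, hrdef, hc, haR]
      exact diag_sum b ω j
    rw [← hval]
    exact hfin
  -- Step G: identify S with the right-hand side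
  rw [hLHS]
  norm_cast
  by_cases hcase : b^2 ≤ ω^2
  · rw [if_pos hcase]
    rcases eq_or_lt_of_le hcase with heq | hlt
    · -- ω² = b²
      have hz : ω^2 - b^2 = 0 := by linarith
      have hz' : b^2 - ω^2 = 0 := by linarith
      have h1 : HasSum T 2 := by
        have h2 := hasSum_single (f := T) 0 (fun j hj => by
          rw [hT]
          simp only
          rw [hz', zero_pow hj]
          simp)
        have h3 : T 0 = 2 := by rw [hT]; norm_num
        rwa [h3] at h2
      rw [hrT.unique h1, hz, Real.sqrt_zero]
      rw [_root_.sinc]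
      norm_num
    · -- ω² > b²
      have hv : 0 < ω^2 - b^2 := by linarith
      set s := Real.sqrt (ω^2 - b^2) with hs
      have hs0 : 0 < s := Real.sqrt_pos.mpr hv
      have hs2 : s^2 = ω^2 - b^2 := Real.sq_sqrt (le_of_lt hv)
      have hbω : b^2 - ω^2 = -(s^2) := by rw [hs2]; ring
      have h2 := (Real.hasSum_sin s).mul_left (2/s)
      have h1 : HasSum T (2/s * Real.sin s) := by
        refine h2.congr_fun fun j => ?_
        rw [hT]
        simp only
        rw [hbω, neg_pow, ← pow_mul]
        have hsj : s^(2*j+1) = s^(2*j) * s := by rw [pow_succ]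
        rw [hsj]
        field_simp
      rw [hrT.unique h1, _root_.sinc, if_neg hs0.ne']
      field_simp
  · rw [if_neg hcase]
    have hv : 0 < b^2 - ω^2 := by nlinarith [lt_of_not_ge hcase]
    set s := Real.sqrt (b^2 - ω^2) with hs
    have hs0 : 0 < s := Real.sqrt_pos.mpr hv
    have hs2 : s^2 = b^2 - ω^2 := Real.sq_sqrt (le_of_lt hv)
    have h2 := (my_hasSum_sinh s).mul_left (2/s)
    have h1 : HasSum T (2/s * Real.sinh s) := by
      refine h2.congr_fun fun j => ?_
      rw [hT]
      simp only
      rw [← hs2, ← pow_mul]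
      have hsj : s^(2*j+1) = s^(2*j) * s := by rw [pow_succ]
      rw [hsj]
      field_simp
    rw [hrT.unique h1]
    field_simp
end

section
/- Let b, δ > 0, k an integer, and K₀ ≥ 0 with |k| > K₀ + 2b/δ. Define Ψ̂_k(ω) = (b e^{-iδω/2}/sinh b)[(1 - ω/(2k)) sinc √((δ(ω+k)/2)² - b²) + (1 + ω/(2k)) sinc √((δ(ω-k)/2)² - b²)]. Then for all ω with |ω| ≤ K₀, the arguments of both sinc functions are real, and |Ψ̂_k(ω)| ≤ (3b/sinh b) · 1/√((δ(|k|-K₀)/2)² - b²). -/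
open Real

lemma abs_sinc_le {x : ℝ} (hx : 0 < x) : |_root_.sinc x| ≤ 1 / x := by
  rw [_root_.sinc, if_neg hx.ne', abs_div, abs_of_pos hx]
  gcongr
  exact abs_sin_le_one x

/-- Bound on the Fourier transform of the influence kernel: for `|k| > K₀ + 2b/δ`
and `|ω| ≤ K₀`, both sinc arguments are real (their squared arguments are positive)
and `|Ψ̂_k(ω)| ≤ (3b/sinh b)/√((δ(|k|-K₀)/2)² - b²)`. -/
theorem influence_kernel_fourier_bound (b δ : ℝ) (hb : 0 < b) (hδ : 0 < δ)
    (k : ℤ) (K₀ : ℝ) (hK₀ : 0 ≤ K₀) (hk : K₀ + 2 * b / δ < |(k : ℝ)|)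
    (ω : ℝ) (hω : |ω| ≤ K₀) :
    0 < (δ * (ω + k) / 2) ^ 2 - b ^ 2 ∧
    0 < (δ * (ω - k) / 2) ^ 2 - b ^ 2 ∧
    ‖
        (((b : ℂ) * Complex.exp (-Complex.I * (δ * ω / 2)) / (Real.sinh b : ℂ)) *
          ((1 - (ω : ℂ) / (2 * (k : ℂ))) *
              (_root_.sinc (Real.sqrt ((δ * (ω + k) / 2) ^ 2 - b ^ 2)) : ℝ) +
           (1 + (ω : ℂ) / (2 * (k : ℂ))) *
              (_root_.sinc (Real.sqrt ((δ * (ω - k) / 2) ^ 2 - b ^ 2)) : ℝ)))‖ ≤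
      (3 * b / Real.sinh b) *
        (1 / Real.sqrt ((δ * (|(k : ℝ)| - K₀) / 2) ^ 2 - b ^ 2)) := by
  set c : ℝ := |(k : ℝ)| - K₀ with hc_def
  have hc : 2 * b / δ < c := by simp [hc_def]; linarith
  have hc0 : 0 < c := lt_trans (by positivity) hc
  clear_value c
  have hbδc : b < δ * c / 2 := by
    rw [div_lt_iff₀ hδ] at hc; nlinarith
  have hT : 0 < (δ * c / 2) ^ 2 - b ^ 2 := by nlinarith
  have habs1 : c ≤ |ω + k| := by
    have := abs_sub_abs_le_abs_sub (k : ℝ) (-ω)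
    simp only [abs_neg, sub_neg_eq_add] at this
    rw [hc_def]; rw [add_comm]; linarith
  have habs2 : c ≤ |ω - k| := by
    have := abs_sub_abs_le_abs_sub (k : ℝ) ω
    rw [abs_sub_comm] at this
    rw [hc_def]; linarith
  have key : ∀ x : ℝ, c ≤ |x| → (δ * c / 2) ^ 2 - b ^ 2 ≤ (δ * x / 2) ^ 2 - b ^ 2 := by
    intro x hx
    have h3 : c ^ 2 ≤ x ^ 2 := by
      rw [← sq_abs x]; exact pow_le_pow_left₀ hc0.le hx 2
    nlinarith [mul_le_mul_of_nonneg_left h3 (sq_nonneg δ)]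
  have hA : (δ * c / 2) ^ 2 - b ^ 2 ≤ (δ * (ω + k) / 2) ^ 2 - b ^ 2 := key _ habs1
  have hB : (δ * c / 2) ^ 2 - b ^ 2 ≤ (δ * (ω - k) / 2) ^ 2 - b ^ 2 := key _ habs2
  have hA0 : 0 < (δ * (ω + k) / 2) ^ 2 - b ^ 2 := lt_of_lt_of_le hT hA
  have hB0 : 0 < (δ * (ω - k) / 2) ^ 2 - b ^ 2 := lt_of_lt_of_le hT hB
  refine ⟨hA0, hB0, ?_⟩
  set M : ℝ := Real.sqrt ((δ * c / 2) ^ 2 - b ^ 2) with hM_def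
  have hM0 : 0 < M := Real.sqrt_pos.mpr hT
  have hsinA : |_root_.sinc (Real.sqrt ((δ * (ω + k) / 2) ^ 2 - b ^ 2))| ≤ 1 / M := by
    refine le_trans (abs_sinc_le (Real.sqrt_pos.mpr hA0)) ?_
    exact one_div_le_one_div_of_le hM0 (Real.sqrt_le_sqrt hA)
  have hsinB : |_root_.sinc (Real.sqrt ((δ * (ω - k) / 2) ^ 2 - b ^ 2))| ≤ 1 / M := by
    refine le_trans (abs_sinc_le (Real.sqrt_pos.mpr hB0)) ?_
    exact one_div_le_one_div_of_le hM0 (Real.sqrt_le_sqrt hB)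
  -- |ω/(2k)| ≤ 1/2
  have hk0 : (0:ℝ) < |(k:ℝ)| := lt_trans (by positivity) hk
  have hωk : |ω / (2 * (k:ℝ))| ≤ 1 / 2 := by
    rw [abs_div, abs_mul, abs_two, div_le_div_iff₀ (by positivity) two_pos]
    have : |ω| ≤ |(k:ℝ)| := le_trans hω (by linarith [div_pos (by positivity : (0:ℝ) < 2*b) hδ])
    nlinarith
  have hu : ‖(1 - (ω : ℂ) / (2 * (k : ℂ)))‖ ≤ 3 / 2 := by
    have : (1 - (ω : ℂ) / (2 * (k : ℂ))) = ((1 - ω / (2 * (k:ℝ)) : ℝ) : ℂ) := by push_cast; ring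
    rw [this, Complex.norm_real, Real.norm_eq_abs]
    have := abs_sub_abs_le_abs_sub (1 - ω / (2 * (k:ℝ))) 1
    have h1 := abs_abs (1 - ω / (2 * (k:ℝ)))
    calc |1 - ω / (2 * (k:ℝ))| ≤ |(1:ℝ)| + |ω / (2 * (k:ℝ))| := by
          have := abs_sub (1:ℝ) (ω / (2 * (k:ℝ))); exact abs_sub _ _
      _ ≤ 3/2 := by rw [abs_one]; linarith
  have hv : ‖(1 + (ω : ℂ) / (2 * (k : ℂ)))‖ ≤ 3 / 2 := by
    have : (1 + (ω : ℂ) / (2 * (k : ℂ))) = ((1 + ω / (2 * (k:ℝ)) : ℝ) : ℂ) := by push_cast; ring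
    rw [this, Complex.norm_real, Real.norm_eq_abs]
    calc |1 + ω / (2 * (k:ℝ))| ≤ |(1:ℝ)| + |ω / (2 * (k:ℝ))| := abs_add_le _ _
      _ ≤ 3/2 := by rw [abs_one]; linarith
  have hsinh : 0 < Real.sinh b := Real.sinh_pos_iff.mpr hb
  have hfront : ‖((b : ℂ) * Complex.exp (-Complex.I * (δ * ω / 2)) / (Real.sinh b : ℂ))‖
      = b / Real.sinh b := by
    rw [norm_div, norm_mul, Complex.norm_exp, Complex.norm_real, Complex.norm_real, Real.norm_eq_abs, Real.norm_eq_abs]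
    have hre : ((-Complex.I * (δ * ω / 2)).re) = 0 := by simp
    rw [hre, Real.exp_zero, abs_of_pos hb, abs_of_pos hsinh, mul_one]
  rw [norm_mul, hfront]
  have hsum : ‖
      ((1 - (ω : ℂ) / (2 * (k : ℂ))) *
          (_root_.sinc (Real.sqrt ((δ * (ω + k) / 2) ^ 2 - b ^ 2)) : ℝ) +
       (1 + (ω : ℂ) / (2 * (k : ℂ))) *
          (_root_.sinc (Real.sqrt ((δ * (ω - k) / 2) ^ 2 - b ^ 2)) : ℝ))‖ ≤ 3 * (1 / M) := by
    refine le_trans (norm_add_le _ _) ?_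
    rw [norm_mul, norm_mul, Complex.norm_real, Complex.norm_real, Real.norm_eq_abs, Real.norm_eq_abs]
    have h1 : ‖(1 - (ω : ℂ) / (2 * (k : ℂ)))‖ *
        |_root_.sinc (Real.sqrt ((δ * (ω + k) / 2) ^ 2 - b ^ 2))| ≤ 3/2 * (1/M) :=
      mul_le_mul hu hsinA (abs_nonneg _) (by norm_num)
    have h2 : ‖(1 + (ω : ℂ) / (2 * (k : ℂ)))‖ *
        |_root_.sinc (Real.sqrt ((δ * (ω - k) / 2) ^ 2 - b ^ 2))| ≤ 3/2 * (1/M) :=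
      mul_le_mul hv hsinB (abs_nonneg _) (by norm_num)
    linarith
  calc b / Real.sinh b * ‖_‖ ≤ b / Real.sinh b * (3 * (1 / M)) :=
        mul_le_mul_of_nonneg_left hsum (by positivity)
    _ = 3 * b / Real.sinh b * (1 / M) := by ring
end
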